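/- arXiv:2502.20569 — 2 statements merged into one kernel-verified Lean document; each statement's English description precedes it below -/
import Mathlib

section
/- For any integers a, b, c, d ≥ 0 and T ≥ 28, one has ∫_{14}^{T−14} u^a (T−u)^b (log u)^c (log(T−u))^d du = (a! b! / (a+b+1)!) · T^{a+b+1} (log T)^{c+d} · (1 + O(log log T / log T)), where the implied constant depends only on a, b, c, d. -/
open Real intervalIntegral


lemma beta_int : ∀ (b a : ℕ) (T : ℝ),
    ∫ u in (0:ℝ)..T, u ^ a * (T - u) ^ b =
      ((a.factorial : ℝ) * b.factorial / (a + b + 1).factorial) * T ^ (a + b + 1) := by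
  intro b
  induction b with
  | zero =>
    intro a T
    simp [integral_pow]
    rw [Nat.factorial_succ]
    push_cast
    have : ((a:ℝ)+1) ≠ 0 := by positivity
    have h2 : (a.factorial : ℝ) ≠ 0 := by positivity
    field_simp
  | succ b IH =>
    intro a T
    have hF : ∀ u : ℝ, HasDerivAt (fun u : ℝ => u ^ (a+1) * (T - u) ^ (b+1) * ((a:ℝ)+1)⁻¹)
        ((u ^ a * (T - u) ^ (b+1) - ((b:ℝ)+1)/((a:ℝ)+1) * (u ^ (a+1) * (T - u) ^ b))) u := by
      intro u
      have h1 : HasDerivAt (fun u : ℝ => u ^ (a+1)) (((a:ℝ)+1) * u ^ a) u := by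
        simpa using hasDerivAt_pow (a+1) u
      have h2 : HasDerivAt (fun u : ℝ => (T - u) ^ (b+1))
          (((b:ℝ)+1) * (T - u) ^ b * (-1)) u := by
        convert ((hasDerivAt_id u).const_sub T).pow (b+1) using 1
        · rfl
        · rfl
        · rfl
        · simp [id]
      have := (h1.mul h2).mul_const (((a:ℝ)+1)⁻¹)
      convert this using 1
      · rfl
      · rfl
      · rfl
      · have : ((a:ℝ)+1) ≠ 0 := by positivity
        field_simp
        ring
    have hint1 : IntervalIntegrable (fun u : ℝ => u ^ a * (T - u) ^ (b+1)) MeasureTheory.volume 0 T :=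
      (Continuous.intervalIntegrable (by continuity) _ _)
    have hint2 : IntervalIntegrable (fun u : ℝ => ((b:ℝ)+1)/((a:ℝ)+1) * (u ^ (a+1) * (T - u) ^ b)) MeasureTheory.volume 0 T :=
      (Continuous.intervalIntegrable (by continuity) _ _)
    have key := intervalIntegral.integral_eq_sub_of_hasDerivAt
      (f := fun u : ℝ => u ^ (a+1) * (T - u) ^ (b+1) * ((a:ℝ)+1)⁻¹)
      (fun x _ => hF x) (hint1.sub hint2)
    rw [intervalIntegral.integral_sub hint1 hint2] at key
    norm_num at key
    have key2 : (∫ u in (0:ℝ)..T, u ^ a * (T - u) ^ (b+1)) =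
        ((b:ℝ)+1)/((a:ℝ)+1) * ∫ u in (0:ℝ)..T, u ^ (a+1) * (T - u) ^ b := by
      linarith [key]
    rw [key2, IH (a+1) T]
    have e1 : (a + 1) + b + 1 = a + (b+1) + 1 := by ring
    rw [e1]
    have hfa : ((a+1).factorial : ℝ) = ((a:ℝ)+1) * a.factorial := by
      rw [Nat.factorial_succ]; push_cast; ring
    have hfb : ((b+1).factorial : ℝ) = ((b:ℝ)+1) * b.factorial := by
      rw [Nat.factorial_succ]; push_cast; ring
    rw [hfa, hfb]
    have : ((a:ℝ)+1) ≠ 0 := by positivity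
    have h2 : ((a + (b+1) + 1).factorial : ℝ) ≠ 0 := by positivity
    field_simp


lemma pow_gapL : ∀ (n : ℕ) {x L : ℝ}, 0 ≤ x → x ≤ L →
    L * (L^n - x^n) ≤ n * L^n * (L - x) := by
  intro n
  induction n with
  | zero => intro x L hx hxL; simp
  | succ n IH =>
    intro x L hx hxL
    have hL : 0 ≤ L := le_trans hx hxL
    have h1 := IH hx hxL
    have h2 : x ^ n ≤ L ^ n := pow_le_pow_left₀ hx hxL n
    have h3 : 0 ≤ L ^ n := pow_nonneg hL n
    have : L * (L^(n+1) - x^(n+1)) = L * (L * (L^n - x^n)) + L * x^n * (L - x) := by ring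
    rw [this]
    have h4 : L * (L * (L^n - x^n)) ≤ L * (n * L^n * (L - x)) :=
      mul_le_mul_of_nonneg_left h1 hL
    have h5 : L * x^n * (L - x) ≤ L * L^n * (L - x) := by
      apply mul_le_mul_of_nonneg_right _ (by linarith)
      exact mul_le_mul_of_nonneg_left h2 hL
    push_cast
    calc L * (L * (L ^ n - x ^ n)) + L * x ^ n * (L - x)
        ≤ L * (↑n * L ^ n * (L - x)) + L * L ^ n * (L - x) := add_le_add h4 h5
      _ = ((n:ℝ) + 1) * L ^ (n + 1) * (L - x) := by ring

lemma two_pow_gap (c d : ℕ) {x y L : ℝ} (hx : 0 ≤ x) (hxL : x ≤ L) (hy : 0 ≤ y) (hyL : y ≤ L) :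
    L * (L^(c+d) - x^c * y^d) ≤ L^(c+d) * (c*(L-x) + d*(L-y)) := by
  have hL : 0 ≤ L := le_trans hx hxL
  have h1 := pow_gapL c hx hxL
  have h2 := pow_gapL d hy hyL
  have h3 : x ^ c ≤ L ^ c := pow_le_pow_left₀ hx hxL c
  have h4 : 0 ≤ L ^ c := pow_nonneg hL c
  have h5 : 0 ≤ L ^ d := pow_nonneg hL d
  have h6 : 0 ≤ x ^ c := pow_nonneg hx c
  have h7 : 0 ≤ L * (L^d - y^d) := by
    have : y ^ d ≤ L ^ d := pow_le_pow_left₀ hy hyL d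
    have := sub_nonneg.mpr this
    positivity
  have key : L * (L^(c+d) - x^c * y^d) =
      L^d * (L * (L^c - x^c)) + x^c * (L * (L^d - y^d)) := by
    rw [pow_add]; ring
  rw [key, pow_add]
  have t1 : L^d * (L * (L^c - x^c)) ≤ L^d * (c * L^c * (L - x)) :=
    mul_le_mul_of_nonneg_left h1 h5
  have t2 : x^c * (L * (L^d - y^d)) ≤ L^c * (L * (L^d - y^d)) :=
    mul_le_mul_of_nonneg_right h3 h7
  have t3 : L^c * (L * (L^d - y^d)) ≤ L^c * (d * L^d * (L - y)) :=
    mul_le_mul_of_nonneg_left h2 h4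
  nlinarith [t1, t2, t3]

lemma log_le_two_sqrt {t : ℝ} (ht : 0 < t) : Real.log t ≤ 2 * Real.sqrt t := by
  have h1 : Real.log (Real.sqrt t) ≤ Real.sqrt t - 1 :=
    Real.log_le_sub_one_of_pos (Real.sqrt_pos.mpr ht)
  have h2 : Real.log (Real.sqrt t) = Real.log t / 2 := Real.log_sqrt ht.le
  linarith [Real.sqrt_nonneg t]


lemma middle_piece (a b : ℕ) (T : ℝ) (hT : 28 ≤ T) :
    ∫ u in (14:ℝ)..(T-14), u^a * (T-u)^b * (Real.log T - Real.log u) ≤ 4 * T^(a+b+1) := by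
  have hT0 : (0:ℝ) < T := by linarith
  have h14 : (14:ℝ) ≤ T - 14 := by linarith
  set r : ℝ := (a:ℝ) - 1/2 with hr
  have hr1 : (-1:ℝ) < r := by
    have : (0:ℝ) ≤ (a:ℝ) := Nat.cast_nonneg a
    rw [hr]; linarith
  have hr2 : (0:ℝ) < r + 1 := by linarith
  -- pointwise bound
  have hpt : ∀ u ∈ Set.Icc (14:ℝ) (T-14),
      u^a * (T-u)^b * (Real.log T - Real.log u) ≤ (2 * T^b * Real.sqrt T) * u ^ r := by
    intro u hu
    obtain ⟨hu1, hu2⟩ := hu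
    have hu0 : (0:ℝ) < u := by linarith
    have hTu : 0 ≤ T - u := by linarith
    have hTub : T - u ≤ T := by linarith
    have hlog : Real.log T - Real.log u = Real.log (T / u) := (Real.log_div hT0.ne' hu0.ne').symm
    have hlogle : Real.log (T / u) ≤ 2 * Real.sqrt (T / u) := by
      have h1 : Real.log (Real.sqrt (T/u)) ≤ Real.sqrt (T/u) - 1 :=
        Real.log_le_sub_one_of_pos (Real.sqrt_pos.mpr (by positivity))
      have h2 : Real.log (Real.sqrt (T/u)) = Real.log (T/u) / 2 :=
        Real.log_sqrt (by positivity)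
      linarith [Real.sqrt_nonneg (T/u)]
    have hsq : Real.sqrt (T / u) = Real.sqrt T / Real.sqrt u := Real.sqrt_div' T hu0.le
    have hrw : u^a * Real.sqrt (T/u) = Real.sqrt T * u ^ r := by
      rw [hsq, Real.sqrt_eq_rpow u, ← Real.rpow_natCast u a, hr, div_eq_mul_inv,
        ← Real.rpow_neg hu0.le, sub_eq_add_neg, Real.rpow_add hu0]
      ring
    calc u^a * (T-u)^b * (Real.log T - Real.log u)
        ≤ u^a * T^b * (2 * Real.sqrt (T/u)) := by
          rw [hlog]
          have g1 : u^a * (T-u)^b ≤ u^a * T^b := by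
            have : (T-u)^b ≤ T^b := pow_le_pow_left₀ hTu hTub b
            exact mul_le_mul_of_nonneg_left this (by positivity)
          have g2 : 0 ≤ Real.log (T/u) := by
            apply Real.log_nonneg
            rw [le_div_iff₀ hu0]; linarith
          calc u^a * (T-u)^b * Real.log (T/u) ≤ u^a * T^b * Real.log (T/u) :=
                mul_le_mul_of_nonneg_right g1 g2
            _ ≤ u^a * T^b * (2 * Real.sqrt (T/u)) := by
                apply mul_le_mul_of_nonneg_left hlogle (by positivity)
      _ = (2 * T^b * Real.sqrt T) * u ^ r := by
          have : u^a * T^b * (2 * Real.sqrt (T/u)) = 2 * T^b * (u^a * Real.sqrt (T/u)) := by ring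
          rw [this, hrw]; ring
  -- integrate
  have hint1 : IntervalIntegrable (fun u : ℝ => u^a * (T-u)^b * (Real.log T - Real.log u))
      MeasureTheory.volume 14 (T-14) := by
    apply ContinuousOn.intervalIntegrable
    rw [Set.uIcc_of_le h14]
    apply ContinuousOn.mul
    · exact (continuousOn_pow a).mul ((continuousOn_const.sub continuousOn_id).pow b)
    · refine continuousOn_const.sub (Real.continuousOn_log.mono ?_)
      intro x hx
      simp only [Set.mem_compl_iff, Set.mem_singleton_iff]
      rcases hx with ⟨hx1, _⟩; intro h; rw [h] at hx1; norm_num at hx1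
  have hint2 : IntervalIntegrable (fun u : ℝ => (2 * T^b * Real.sqrt T) * u ^ r)
      MeasureTheory.volume 14 (T-14) :=
    (intervalIntegrable_rpow' hr1).const_mul _
  have key := intervalIntegral.integral_mono_on h14 hint1 hint2 hpt
  rw [intervalIntegral.integral_const_mul, integral_rpow (Or.inl hr1)] at key
  have hTpow : (T-14) ^ (r+1) - (14:ℝ) ^ (r+1) ≤ T ^ (r+1) := by
    have h1 : (T-14) ^ (r+1) ≤ T ^ (r+1) :=
      Real.rpow_le_rpow (by linarith) (by linarith) hr2.le
    have h2 : (0:ℝ) ≤ (14:ℝ) ^ (r+1) := Real.rpow_nonneg (by norm_num) _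
    linarith
  have hhalf : (1:ℝ)/2 ≤ r + 1 := by
    have : (0:ℝ) ≤ (a:ℝ) := Nat.cast_nonneg a
    rw [hr]; linarith
  have hfin : ((T-14) ^ (r+1) - (14:ℝ) ^ (r+1)) / (r+1) ≤ 2 * T ^ (r+1) := by
    rw [div_le_iff₀ hr2]
    have hTr : (0:ℝ) ≤ T ^ (r+1) := Real.rpow_nonneg hT0.le _
    have h21 : (0:ℝ) ≤ 2*(r+1) - 1 := by
      rw [hr]; have : (0:ℝ) ≤ (a:ℝ) := Nat.cast_nonneg a; linarith
    have hx : 0 ≤ T ^ (r+1) * (2*(r+1) - 1) := mul_nonneg hTr h21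
    nlinarith [hTpow, hx]
  have hsqT : Real.sqrt T * T ^ (r+1) = T ^ (a+1 : ℕ) := by
    rw [Real.sqrt_eq_rpow, ← Real.rpow_add hT0, ← Real.rpow_natCast T (a+1)]
    congr 1
    rw [hr]; push_cast; ring
  calc ∫ u in (14:ℝ)..(T-14), u^a * (T-u)^b * (Real.log T - Real.log u)
      ≤ 2 * T^b * Real.sqrt T * (((T-14) ^ (r+1) - (14:ℝ) ^ (r+1)) / (r+1)) := key
    _ ≤ 2 * T^b * Real.sqrt T * (2 * T ^ (r+1)) := by
        apply mul_le_mul_of_nonneg_left hfin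
        positivity
    _ = 4 * T^b * (Real.sqrt T * T ^ (r+1)) := by ring
    _ = 4 * T^(a+b+1) := by
        rw [hsqT]; ring

set_option maxHeartbeats 1000000 in
theorem beta_type_integral_asymp (a b c d : ℕ) :
    ∃ C : ℝ, ∀ T : ℝ, 28 ≤ T →
      |(∫ u in (14:ℝ)..(T - 14),
            u ^ a * (T - u) ^ b * (Real.log u) ^ c * (Real.log (T - u)) ^ d) -
          ((a.factorial : ℝ) * b.factorial / (a + b + 1).factorial) * T ^ (a + b + 1) *
            (Real.log T) ^ (c + d)| ≤
        C * (((a.factorial : ℝ) * b.factorial / (a + b + 1).factorial) * T ^ (a + b + 1) *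
            (Real.log T) ^ (c + d)) * (Real.log (Real.log T) / Real.log T) := by
  refine ⟨(2 * 14^(a+b+1) + 4*((c:ℝ)+(d:ℝ))) *
      (((a+b+1).factorial : ℝ) / ((a.factorial : ℝ) * b.factorial)), ?_⟩
  intro T hT
  have hT0 : (0:ℝ) < T := by linarith
  have h14 : (14:ℝ) ≤ T - 14 := by linarith
  set B : ℝ := (a.factorial : ℝ) * b.factorial / (a + b + 1).factorial with hB
  have hfa0 : (0:ℝ) < (a.factorial : ℝ) := by exact_mod_cast a.factorial_pos
  have hfb0 : (0:ℝ) < (b.factorial : ℝ) := by exact_mod_cast b.factorial_pos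
  have hfab0 : (0:ℝ) < ((a+b+1).factorial : ℝ) := by exact_mod_cast (a+b+1).factorial_pos
  have hBpos : 0 < B := by rw [hB]; positivity
  set L := Real.log T with hL
  -- logarithm bounds
  have hexp1 : Real.exp 1 < 2.7182818286 := Real.exp_one_lt_d9
  have hL3 : 3 < L := by
    have h1 : Real.exp 3 < 28 := by
      have h2 : Real.exp 3 = (Real.exp 1)^3 := by
        rw [← Real.exp_nat_mul]; norm_num
      rw [h2]
      have h3 : Real.exp 1 ^ 3 < 2.7182818286^3 :=
        pow_lt_pow_left₀ hexp1 (Real.exp_pos 1).le (by norm_num)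
      have h4 : (2.7182818286:ℝ)^3 < 28 := by norm_num
      linarith
    calc (3:ℝ) = Real.log (Real.exp 3) := (Real.log_exp 3).symm
      _ < L := Real.log_lt_log (Real.exp_pos 3) (lt_of_lt_of_le h1 hT)
  have hL0 : (0:ℝ) < L := by linarith
  have hLL1 : 1 ≤ Real.log L := by
    have he : Real.exp 1 < L := by nlinarith
    calc (1:ℝ) = Real.log (Real.exp 1) := (Real.log_exp 1).symm
      _ ≤ Real.log L := (Real.log_lt_log (Real.exp_pos 1) he).le
  have hLT : L ≤ T := by
    have := Real.log_le_sub_one_of_pos hT0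
    linarith
  -- bounds for log u on the interval
  have hlogbounds : ∀ u ∈ Set.Icc (14:ℝ) (T-14),
      0 ≤ Real.log u ∧ Real.log u ≤ L ∧ 0 ≤ Real.log (T-u) ∧ Real.log (T-u) ≤ L := by
    intro u hu
    obtain ⟨hu1, hu2⟩ := hu
    have hu0 : (0:ℝ) < u := by linarith
    have hTu0 : (0:ℝ) < T - u := by linarith
    refine ⟨Real.log_nonneg (by linarith), Real.log_le_log hu0 (by linarith),
      Real.log_nonneg (by linarith), Real.log_le_log hTu0 (by linarith)⟩
  -- continuity / integrability
  have hgc : Continuous (fun u : ℝ => u ^ a * (T - u) ^ b) := by continuity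
  have hlogc : ContinuousOn (fun u : ℝ => Real.log u) (Set.Icc (14:ℝ) (T-14)) := by
    refine Real.continuousOn_log.mono ?_
    intro x hx
    simp only [Set.mem_compl_iff, Set.mem_singleton_iff]
    rcases hx with ⟨hx1, _⟩; intro h; rw [h] at hx1; norm_num at hx1
  have hlogc2 : ContinuousOn (fun u : ℝ => Real.log (T - u)) (Set.Icc (14:ℝ) (T-14)) := by
    apply ContinuousOn.comp (Real.continuousOn_log) (continuousOn_const.sub continuousOn_id)
    intro x hx
    simp only [Set.mem_compl_iff, Set.mem_singleton_iff]
    rcases hx with ⟨_, hx2⟩; intro h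
    have : T - id x = 0 := h
    simp only [id] at this
    have : x = T := by linarith
    subst this; linarith [hx2]
  have hfi : IntervalIntegrable
      (fun u : ℝ => u ^ a * (T - u) ^ b * (Real.log u) ^ c * (Real.log (T - u)) ^ d)
      MeasureTheory.volume 14 (T-14) := by
    apply ContinuousOn.intervalIntegrable
    rw [Set.uIcc_of_le h14]
    exact ((hgc.continuousOn.mul (hlogc.pow c)).mul (hlogc2.pow d))
  have hgi : ∀ x y : ℝ, IntervalIntegrable (fun u : ℝ => u ^ a * (T - u) ^ b)
      MeasureTheory.volume x y := fun x y => hgc.intervalIntegrable x y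
  have h1i : IntervalIntegrable (fun u : ℝ => u^a * (T-u)^b * (L - Real.log u))
      MeasureTheory.volume 14 (T-14) := by
    apply ContinuousOn.intervalIntegrable
    rw [Set.uIcc_of_le h14]
    exact hgc.continuousOn.mul (continuousOn_const.sub hlogc)
  have h2i : IntervalIntegrable (fun u : ℝ => u^a * (T-u)^b * (L - Real.log (T-u)))
      MeasureTheory.volume 14 (T-14) := by
    apply ContinuousOn.intervalIntegrable
    rw [Set.uIcc_of_le h14]
    exact hgc.continuousOn.mul (continuousOn_const.sub hlogc2)
  -- the integrals
  set I := ∫ u in (14:ℝ)..(T - 14),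
      u ^ a * (T - u) ^ b * (Real.log u) ^ c * (Real.log (T - u)) ^ d with hI
  set I2 := ∫ u in (14:ℝ)..(T - 14), u ^ a * (T - u) ^ b with hI2
  have hI3 : (∫ u in (0:ℝ)..T, u ^ a * (T - u) ^ b) = B * T ^ (a+b+1) := beta_int b a T
  -- Step A : I ≤ L^(c+d) * I2
  have hstepA : I ≤ L^(c+d) * I2 := by
    have hmono := intervalIntegral.integral_mono_on (μ := MeasureTheory.volume) h14 hfi
      ((hgi 14 (T-14)).const_mul (L^(c+d)))
      (fun u hu => by
        obtain ⟨hx0, hxL, hy0, hyL⟩ := hlogbounds u hu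
        obtain ⟨hu1, hu2⟩ := hu
        have hu0 : (0:ℝ) ≤ u := by linarith
        have hTu0 : (0:ℝ) ≤ T - u := by linarith
        have : u ^ a * (T - u) ^ b * (Real.log u) ^ c * (Real.log (T - u)) ^ d ≤
            u ^ a * (T - u) ^ b * L ^ c * L ^ d := by
          gcongr
        calc u ^ a * (T - u) ^ b * (Real.log u) ^ c * (Real.log (T - u)) ^ d
            ≤ u ^ a * (T - u) ^ b * L ^ c * L ^ d := this
          _ = L^(c+d) * (u ^ a * (T - u) ^ b) := by rw [pow_add]; ring)
    rw [intervalIntegral.integral_const_mul] at hmono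
    exact hmono
  -- Step B : I2 ≤ ∫ 0..T
  have hstepB : I2 ≤ B * T ^ (a+b+1) := by
    rw [← hI3]
    apply intervalIntegral.integral_mono_interval (by norm_num) h14 (by linarith)
    · filter_upwards [MeasureTheory.ae_restrict_mem measurableSet_Ioc] with u hu
      obtain ⟨hu1, hu2⟩ := hu
      have : (0:ℝ) ≤ T - u := by linarith
      positivity
    · exact hgi 0 T
  have hLcd : (0:ℝ) ≤ L^(c+d) := by positivity
  have hIleM : I ≤ B * T ^ (a+b+1) * L^(c+d) := by
    calc I ≤ L^(c+d) * I2 := hstepA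
      _ ≤ L^(c+d) * (B * T ^ (a+b+1)) := mul_le_mul_of_nonneg_left hstepB hLcd
      _ = B * T ^ (a+b+1) * L^(c+d) := by ring
  -- tail bound
  have hsplit : (∫ u in (0:ℝ)..T, u ^ a * (T - u) ^ b) =
      (∫ u in (0:ℝ)..14, u ^ a * (T - u) ^ b) + I2 +
      (∫ u in (T-14:ℝ)..T, u ^ a * (T - u) ^ b) := by
    rw [hI2]
    rw [intervalIntegral.integral_add_adjacent_intervals (hgi 0 14) (hgi 14 (T-14))]
    rw [intervalIntegral.integral_add_adjacent_intervals (hgi 0 (T-14)) (hgi (T-14) T)]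
  have htail1 : (∫ u in (0:ℝ)..14, u ^ a * (T - u) ^ b) ≤ 14 * ((14:ℝ)^a * T^b) := by
    have := intervalIntegral.integral_mono_on (μ := MeasureTheory.volume)
      (by norm_num : (0:ℝ) ≤ 14) (hgi 0 14)
      (_root_.intervalIntegrable_const (c := (14:ℝ)^a * T^b))
      (fun u hu => by
        obtain ⟨hu1, hu2⟩ := hu
        have e1 : u^a ≤ (14:ℝ)^a := pow_le_pow_left₀ hu1 hu2 a
        have e2 : (T-u)^b ≤ T^b := pow_le_pow_left₀ (by linarith) (by linarith) b
        exact mul_le_mul e1 e2 (pow_nonneg (by linarith) b) (pow_nonneg (by norm_num) a))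
    rw [intervalIntegral.integral_const] at this
    simp only [smul_eq_mul, sub_zero] at this
    linarith [this]
  have htail2 : (∫ u in (T-14:ℝ)..T, u ^ a * (T - u) ^ b) ≤ 14 * (T^a * (14:ℝ)^b) := by
    have := intervalIntegral.integral_mono_on (μ := MeasureTheory.volume)
      (by linarith : T - 14 ≤ T) (hgi (T-14) T)
      (_root_.intervalIntegrable_const (c := T^a * (14:ℝ)^b))
      (fun u hu => by
        obtain ⟨hu1, hu2⟩ := hu
        have e1 : u^a ≤ T^a := pow_le_pow_left₀ (by linarith) hu2 a
        have e2 : (T-u)^b ≤ (14:ℝ)^b := pow_le_pow_left₀ (by linarith) (by linarith) b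
        exact mul_le_mul e1 e2 (pow_nonneg (by linarith) b) (pow_nonneg (by linarith) a))
    rw [intervalIntegral.integral_const] at this
    have e : T - (T - 14) = 14 := by ring
    rw [e] at this
    simp only [smul_eq_mul] at this
    linarith [this]
  have htail : B * T ^ (a+b+1) - I2 ≤ 2 * 14^(a+b+1) * T^(a+b) := by
    have e1 : (14:ℝ) * ((14:ℝ)^a * T^b) ≤ 14^(a+b+1) * T^(a+b) := by
      have p1 : (14:ℝ) * 14^a ≤ 14^(a+b+1) := by
        rw [← pow_succ']
        exact pow_le_pow_right₀ (by norm_num) (by omega)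
      have p2 : T^b ≤ T^(a+b) := pow_le_pow_right₀ (by linarith) (by omega)
      calc (14:ℝ) * ((14:ℝ)^a * T^b) = ((14:ℝ) * 14^a) * T^b := by ring
        _ ≤ 14^(a+b+1) * T^(a+b) :=
          mul_le_mul p1 p2 (pow_nonneg hT0.le b) (by positivity)
    have e2 : (14:ℝ) * (T^a * (14:ℝ)^b) ≤ 14^(a+b+1) * T^(a+b) := by
      have p1 : (14:ℝ) * 14^b ≤ 14^(a+b+1) := by
        rw [← pow_succ']
        exact pow_le_pow_right₀ (by norm_num) (by omega)
      have p2 : T^a ≤ T^(a+b) := pow_le_pow_right₀ (by linarith) (by omega)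
      calc (14:ℝ) * (T^a * (14:ℝ)^b) = ((14:ℝ) * 14^b) * T^a := by ring
        _ ≤ 14^(a+b+1) * T^(a+b) :=
          mul_le_mul p1 p2 (pow_nonneg hT0.le a) (by positivity)
    have := hsplit
    rw [hI3] at this
    linarith
  -- middle bound
  set m1 := ∫ u in (14:ℝ)..(T-14), u^a * (T-u)^b * (L - Real.log u) with hm1def
  set m2 := ∫ u in (14:ℝ)..(T-14), u^a * (T-u)^b * (L - Real.log (T-u)) with hm2def
  have hmid_eq : L * (L^(c+d) * I2 - I) =
      ∫ u in (14:ℝ)..(T-14), L * (L^(c+d) * (u ^ a * (T - u) ^ b) -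
        u ^ a * (T - u) ^ b * (Real.log u) ^ c * (Real.log (T - u)) ^ d) := by
    rw [intervalIntegral.integral_const_mul,
      intervalIntegral.integral_sub ((hgi 14 (T-14)).const_mul _) hfi,
      intervalIntegral.integral_const_mul]
  have hmono2 : (∫ u in (14:ℝ)..(T-14), L * (L^(c+d) * (u ^ a * (T - u) ^ b) -
        u ^ a * (T - u) ^ b * (Real.log u) ^ c * (Real.log (T - u) ^ d))) ≤
      ∫ u in (14:ℝ)..(T-14), L^(c+d) * ((c:ℝ) * (u^a * (T-u)^b * (L - Real.log u)) +
        (d:ℝ) * (u^a * (T-u)^b * (L - Real.log (T-u)))) := by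
    apply intervalIntegral.integral_mono_on h14
    · apply IntervalIntegrable.const_mul
      exact IntervalIntegrable.sub ((hgi 14 (T-14)).const_mul _) hfi
    · exact ((h1i.const_mul _).add (h2i.const_mul _)).const_mul _
    · intro u hu
      obtain ⟨hx0, hxL, hy0, hyL⟩ := hlogbounds u hu
      obtain ⟨hu1, hu2⟩ := hu
      have hgnn : (0:ℝ) ≤ u ^ a * (T - u) ^ b := by
        have : (0:ℝ) ≤ T - u := by linarith
        have : (0:ℝ) ≤ u := by linarith
        positivity
      have key := two_pow_gap c d hx0 hxL hy0 hyL
      have key2 := mul_le_mul_of_nonneg_left key hgnn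
      calc L * (L^(c+d) * (u ^ a * (T - u) ^ b) -
              u ^ a * (T - u) ^ b * (Real.log u) ^ c * (Real.log (T - u) ^ d))
          = (u ^ a * (T - u) ^ b) *
              (L * (L^(c+d) - (Real.log u)^c * (Real.log (T-u))^d)) := by ring
        _ ≤ (u ^ a * (T - u) ^ b) *
              (L^(c+d) * ((c:ℝ)*(L - Real.log u) + (d:ℝ)*(L - Real.log (T-u)))) := key2
        _ = L^(c+d) * ((c:ℝ) * (u^a * (T-u)^b * (L - Real.log u)) +
              (d:ℝ) * (u^a * (T-u)^b * (L - Real.log (T-u)))) := by ring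
  have hrhs_eq : (∫ u in (14:ℝ)..(T-14), L^(c+d) * ((c:ℝ) * (u^a * (T-u)^b * (L - Real.log u)) +
        (d:ℝ) * (u^a * (T-u)^b * (L - Real.log (T-u))))) =
      L^(c+d) * ((c:ℝ) * m1 + (d:ℝ) * m2) := by
    rw [intervalIntegral.integral_const_mul,
      intervalIntegral.integral_add (h1i.const_mul _) (h2i.const_mul _),
      intervalIntegral.integral_const_mul, intervalIntegral.integral_const_mul]
  have hm1 : m1 ≤ 4 * T^(a+b+1) := middle_piece a b T hT
  have hm2 : m2 ≤ 4 * T^(a+b+1) := by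
    have hsub := intervalIntegral.integral_comp_sub_left (a := (14:ℝ)) (b := T-14)
      (fun v => v^b * (T-v)^a * (L - Real.log v)) T
    have e1 : T - (T - 14) = 14 := by ring
    rw [e1] at hsub
    have e2 : m2 = ∫ x in (14:ℝ)..(T-14), (T-x)^b * (T-(T-x))^a * (L - Real.log (T-x)) := by
      rw [hm2def]
      apply intervalIntegral.integral_congr
      intro x _
      simp only [sub_sub_cancel]
      ring
    rw [e2, hsub]
    have := middle_piece b a T hT
    calc (∫ x in (14:ℝ)..(T-14), x^b * (T-x)^a * (L - Real.log x))
        ≤ 4 * T^(b+a+1) := middle_piece b a T hT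
      _ = 4 * T^(a+b+1) := by rw [Nat.add_comm b a]
  have hmidL : L * (L^(c+d) * I2 - I) ≤ L^(c+d) * ((c:ℝ) * (4 * T^(a+b+1)) + (d:ℝ) * (4 * T^(a+b+1))) := by
    rw [hmid_eq]
    refine le_trans hmono2 ?_
    rw [hrhs_eq]
    have : (c:ℝ) * m1 + (d:ℝ) * m2 ≤ (c:ℝ) * (4 * T^(a+b+1)) + (d:ℝ) * (4 * T^(a+b+1)) := by
      have c0 : (0:ℝ) ≤ (c:ℝ) := Nat.cast_nonneg c
      have d0 : (0:ℝ) ≤ (d:ℝ) := Nat.cast_nonneg d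
      exact add_le_add (mul_le_mul_of_nonneg_left hm1 c0) (mul_le_mul_of_nonneg_left hm2 d0)
    exact mul_le_mul_of_nonneg_left this hLcd
  have hmid : L^(c+d) * I2 - I ≤ 4 * ((c:ℝ)+d) * T^(a+b+1) * L^(c+d) / L := by
    rw [le_div_iff₀ hL0]
    nlinarith [hmidL]
  -- final combination
  have habs : |I - B * T ^ (a+b+1) * L^(c+d)| = B * T ^ (a+b+1) * L^(c+d) - I := by
    rw [abs_of_nonpos (by linarith), neg_sub]
  rw [habs]
  have hdecomp : B * T ^ (a+b+1) * L^(c+d) - I =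
      L^(c+d) * (B * T ^ (a+b+1) - I2) + (L^(c+d) * I2 - I) := by ring
  have hterm1 : L^(c+d) * (B * T ^ (a+b+1) - I2) ≤
      2 * 14^(a+b+1) * T^(a+b+1) * L^(c+d) * (Real.log L / L) := by
    have step : L^(c+d) * (B * T ^ (a+b+1) - I2) ≤ L^(c+d) * (2 * 14^(a+b+1) * T^(a+b)) :=
      mul_le_mul_of_nonneg_left htail hLcd
    refine le_trans step ?_
    have hq : T^(a+b) ≤ T^(a+b+1) * (Real.log L / L) := by
      have h1 : 1 ≤ T * (Real.log L / L) := by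
        rw [mul_div_assoc']
        rw [one_le_div hL0]
        nlinarith
      calc T^(a+b) = T^(a+b) * 1 := by ring
        _ ≤ T^(a+b) * (T * (Real.log L / L)) :=
            mul_le_mul_of_nonneg_left h1 (pow_nonneg hT0.le _)
        _ = T^(a+b+1) * (Real.log L / L) := by rw [pow_succ]; ring
    calc L^(c+d) * (2 * 14^(a+b+1) * T^(a+b))
        ≤ L^(c+d) * (2 * 14^(a+b+1) * (T^(a+b+1) * (Real.log L / L))) := by
          apply mul_le_mul_of_nonneg_left _ hLcd
          apply mul_le_mul_of_nonneg_left hq (by positivity)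
      _ = 2 * 14^(a+b+1) * T^(a+b+1) * L^(c+d) * (Real.log L / L) := by ring
  have hterm2 : L^(c+d) * I2 - I ≤ 4 * ((c:ℝ)+d) * T^(a+b+1) * L^(c+d) * (Real.log L / L) := by
    refine le_trans hmid ?_
    have hnn : (0:ℝ) ≤ 4 * ((c:ℝ)+d) * T^(a+b+1) * L^(c+d) := by positivity
    have h1 : (1:ℝ)/L ≤ Real.log L / L := by
      apply div_le_div_of_nonneg_right hLL1 hL0.le
    calc 4 * ((c:ℝ)+d) * T^(a+b+1) * L^(c+d) / L
        = (4 * ((c:ℝ)+d) * T^(a+b+1) * L^(c+d)) * (1/L) := by ring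
      _ ≤ (4 * ((c:ℝ)+d) * T^(a+b+1) * L^(c+d)) * (Real.log L/L) :=
          mul_le_mul_of_nonneg_left h1 hnn
      _ = 4 * ((c:ℝ)+d) * T^(a+b+1) * L^(c+d) * (Real.log L / L) := by ring
  have hone : (((a+b+1).factorial : ℝ) / ((a.factorial : ℝ) * b.factorial)) * B = 1 := by
    rw [hB]; field_simp
  have hCB : (2 * 14^(a+b+1) + 4*((c:ℝ)+(d:ℝ))) *
      (((a+b+1).factorial : ℝ) / ((a.factorial : ℝ) * b.factorial)) *
      (B * T ^ (a + b + 1) * L ^ (c + d)) * (Real.log L / L) =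
      (2 * 14^(a+b+1) + 4*((c:ℝ)+(d:ℝ))) * T^(a+b+1) * L^(c+d) * (Real.log L / L) := by
    calc (2 * 14^(a+b+1) + 4*((c:ℝ)+(d:ℝ))) *
        (((a+b+1).factorial : ℝ) / ((a.factorial : ℝ) * b.factorial)) *
        (B * T ^ (a + b + 1) * L ^ (c + d)) * (Real.log L / L)
        = ((((a+b+1).factorial : ℝ) / ((a.factorial : ℝ) * b.factorial)) * B) *
          ((2 * 14^(a+b+1) + 4*((c:ℝ)+(d:ℝ))) * T^(a+b+1) * L^(c+d) * (Real.log L / L)) := by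
          ring
      _ = (2 * 14^(a+b+1) + 4*((c:ℝ)+(d:ℝ))) * T^(a+b+1) * L^(c+d) * (Real.log L / L) := by
          rw [hone]; ring
  rw [hCB]
  calc B * T ^ (a+b+1) * L^(c+d) - I
      = L^(c+d) * (B * T ^ (a+b+1) - I2) + (L^(c+d) * I2 - I) := hdecomp
    _ ≤ 2 * 14^(a+b+1) * T^(a+b+1) * L^(c+d) * (Real.log L / L) +
        4 * ((c:ℝ)+d) * T^(a+b+1) * L^(c+d) * (Real.log L / L) := add_le_add hterm1 hterm2
    _ = (2 * 14^(a+b+1) + 4*((c:ℝ)+(d:ℝ))) * T^(a+b+1) * L^(c+d) * (Real.log L / L) := by ring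
end

section
/- Let c = c(T) be the unique positive solution of (3/4) log T = c³ T^c for large T. Then c = (4 log log T)/log T − (3 log log log T)/log T − log(256/3)/log T + o(1/log T), and consequently T^c ∼ 3 (log T)⁴ / (256 (log log T)³) as T → ∞. -/
open Real Filter

private lemma abs_sub_le_abs_add_log (a b : ℝ) (ha : 0 < a) (hb : 0 < b) :
    |a - b| ≤ |(a + 3 * Real.log a) - (b + 3 * Real.log b)| := by
  rcases le_total a b with h | h
  · have hl : Real.log a ≤ Real.log b := Real.log_le_log ha h
    rw [abs_of_nonpos (by linarith), abs_of_nonpos (by linarith)]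
    linarith
  · have hl : Real.log b ≤ Real.log a := Real.log_le_log hb h
    rw [abs_of_nonneg (by linarith), abs_of_nonneg (by linarith)]
    linarith

theorem lambertW_solution_asymp (c : ℝ → ℝ)
    (hc : ∀ᶠ T in atTop, 0 < c T ∧ (3/4) * Real.log T = (c T) ^ 3 * T ^ (c T)) :
    (fun T : ℝ => c T - (4 * Real.log (Real.log T) / Real.log T
        - 3 * Real.log (Real.log (Real.log T)) / Real.log T
        - Real.log (256 / 3) / Real.log T))
      =o[atTop] (fun T : ℝ => 1 / Real.log T) ∧
    Filter.Tendsto (fun T : ℝ => T ^ (c T) /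
        (3 * (Real.log T) ^ 4 / (256 * (Real.log (Real.log T)) ^ 3)))
      atTop (nhds 1) := by
  have hL : Tendsto Real.log atTop atTop := Real.tendsto_log_atTop
  have hLL : Tendsto (fun T : ℝ => Real.log (Real.log T)) atTop atTop := hL.comp hL
  have hLLL : Tendsto (fun T : ℝ => Real.log (Real.log (Real.log T))) atTop atTop :=
    hL.comp hLL
  set u : ℝ → ℝ := fun T => c T * Real.log T with hu_def
  set v : ℝ → ℝ := fun T => 4 * Real.log (Real.log T)
      - 3 * Real.log (Real.log (Real.log T)) - Real.log (256/3) with hv_def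
  -- ratio v / (4 LL) → 1
  have h1 : Tendsto (fun T : ℝ =>
      Real.log (Real.log (Real.log T)) / Real.log (Real.log T)) atTop (nhds 0) :=
    (Real.isLittleO_log_id_atTop.tendsto_div_nhds_zero).comp hLL
  have h2 : Tendsto (fun T : ℝ => (Real.log (Real.log T))⁻¹) atTop (nhds 0) :=
    hLL.inv_tendsto_atTop
  have hr : Tendsto (fun T : ℝ => v T / (4 * Real.log (Real.log T))) atTop (nhds 1) := by
    have hgoal : Tendsto (fun T : ℝ => 1
        - (3/4) * (Real.log (Real.log (Real.log T)) / Real.log (Real.log T))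
        - (Real.log (256/3) / 4) * (Real.log (Real.log T))⁻¹) atTop
        (nhds (1 - (3/4) * 0 - (Real.log (256/3) / 4) * 0)) :=
      (tendsto_const_nhds.sub (h1.const_mul _)).sub (h2.const_mul _)
    have h10 : (1 : ℝ) - (3/4) * 0 - (Real.log (256/3) / 4) * 0 = 1 := by ring
    rw [h10] at hgoal
    refine hgoal.congr' ?_
    filter_upwards [hLL.eventually_gt_atTop 0] with T hLLpos
    field_simp [hv_def]
    simp only [hv_def]
  have hLLpos : ∀ᶠ T : ℝ in atTop, 0 < Real.log (Real.log T) := hLL.eventually_gt_atTop 0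
  have hvpos : ∀ᶠ T : ℝ in atTop, 0 < v T := by
    filter_upwards [hr.eventually (eventually_gt_nhds (by norm_num : (1:ℝ)/2 < 1)),
      hLLpos] with T h hp
    have h4 : (0:ℝ) < 4 * Real.log (Real.log T) := by linarith
    have h5 := (lt_div_iff₀ h4).mp h
    simp only [hv_def] at h5 ⊢
    linarith
  -- functional equation for u
  have hfeq : ∀ᶠ T : ℝ in atTop, u T + 3 * Real.log (u T)
      = Real.log (3/4) + 4 * Real.log (Real.log T) := by
    filter_upwards [hc, eventually_gt_atTop (1:ℝ), hL.eventually_gt_atTop 0]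
      with T hcT hT1 hLpos
    obtain ⟨hcpos, heq⟩ := hcT
    have hT0 : (0:ℝ) < T := by linarith
    have hlog_eq : Real.log ((3/4 : ℝ) * Real.log T)
        = Real.log ((c T) ^ 3 * T ^ (c T)) := by rw [heq]
    have hL1 : Real.log ((3/4 : ℝ) * Real.log T)
        = Real.log (3/4) + Real.log (Real.log T) :=
      Real.log_mul (by norm_num) (ne_of_gt hLpos)
    have hR1 : Real.log ((c T) ^ 3 * T ^ (c T))
        = 3 * Real.log (c T) + c T * Real.log T := by
      rw [Real.log_mul (pow_ne_zero _ (ne_of_gt hcpos))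
          (ne_of_gt (Real.rpow_pos_of_pos hT0 _)),
        Real.log_pow, Real.log_rpow hT0]
      push_cast; ring
    have hlogu : Real.log (u T) = Real.log (c T) + Real.log (Real.log T) :=
      Real.log_mul (ne_of_gt hcpos) (ne_of_gt hLpos)
    rw [hlogu]
    rw [hL1, hR1] at hlog_eq
    simp only [hu_def]
    linarith
  -- epsilon tendsto 0
  have heps : Tendsto (fun T : ℝ => (v T + 3 * Real.log (v T))
      - (Real.log (3/4) + 4 * Real.log (Real.log T))) atTop (nhds 0) := by
    have hcont : Tendsto (fun T : ℝ =>
        3 * Real.log (v T / (4 * Real.log (Real.log T)))) atTop (nhds (3 * Real.log 1)) :=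
      (((Real.continuousAt_log (by norm_num)).tendsto.comp hr).const_mul 3)
    rw [Real.log_one, mul_zero] at hcont
    refine hcont.congr' ?_
    filter_upwards [hvpos, hLLpos, hLLL.eventually_gt_atTop 0] with T hv0 hLL0 hLLL0
    have h4ne : (4 : ℝ) * Real.log (Real.log T) ≠ 0 := by positivity
    have e1 : Real.log (v T / (4 * Real.log (Real.log T)))
        = Real.log (v T) - (Real.log 4 + Real.log (Real.log (Real.log T))) := by
      rw [Real.log_div (ne_of_gt hv0) h4ne,
        Real.log_mul (by norm_num) (ne_of_gt hLL0)]
    have e2 : Real.log ((256:ℝ)/3) = 4 * Real.log 4 - Real.log 3 := by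
      rw [Real.log_div (by norm_num) (by norm_num)]
      have : (256:ℝ) = 4 ^ (4:ℕ) := by norm_num
      rw [this, Real.log_pow]; push_cast; ring
    have e3 : Real.log ((3:ℝ)/4) = Real.log 3 - Real.log 4 :=
      Real.log_div (by norm_num) (by norm_num)
    rw [e1]
    simp only [hv_def]
    rw [e2, e3]
    ring
  -- u - v → 0
  have huv : Tendsto (fun T : ℝ => u T - v T) atTop (nhds 0) := by
    have habs : Tendsto (fun T : ℝ => |(v T + 3 * Real.log (v T))
        - (Real.log (3/4) + 4 * Real.log (Real.log T))|) atTop (nhds 0) := by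
      have := heps.abs; rwa [abs_zero] at this
    refine squeeze_zero_norm' ?_ habs
    filter_upwards [hfeq, hvpos, hc, hL.eventually_gt_atTop 0] with T hfT hv0 hcT hL0
    have hu0 : 0 < u T := mul_pos hcT.1 hL0
    have key := abs_sub_le_abs_add_log (u T) (v T) hu0 hv0
    rw [Real.norm_eq_abs]
    calc |u T - v T| ≤ |(u T + 3 * Real.log (u T)) - (v T + 3 * Real.log (v T))| := key
      _ = |(v T + 3 * Real.log (v T)) - (Real.log (3/4) + 4 * Real.log (Real.log T))| := by
          rw [hfT, ← abs_neg]; ring_nf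
  constructor
  · -- little-o part
    have key : (fun T : ℝ => u T - v T) =o[atTop] (fun _ : ℝ => (1:ℝ)) :=
      Asymptotics.isLittleO_one_iff ℝ |>.mpr huv
    have key2 := key.mul_isBigO
      (Asymptotics.isBigO_refl (fun T : ℝ => 1 / Real.log T) atTop)
    refine key2.congr' ?_ ?_
    · filter_upwards [hL.eventually_gt_atTop 0] with T hL0
      have hLne : Real.log T ≠ 0 := ne_of_gt hL0
      simp only [hu_def, hv_def]
      field_simp
    · filter_upwards with T
      rw [one_mul]
  · -- ratio part
    have hexp : Tendsto (fun T : ℝ => Real.exp (u T - v T)) atTop (nhds (Real.exp 0)) :=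
      (Real.continuous_exp.continuousAt.tendsto).comp huv
    rw [Real.exp_zero] at hexp
    refine hexp.congr' ?_
    filter_upwards [eventually_gt_atTop (1:ℝ), hL.eventually_gt_atTop 0, hLLpos]
      with T hT1 hL0 hLL0
    have hT0 : (0:ℝ) < T := by linarith
    have hexpu : Real.exp (u T) = T ^ (c T) := by
      rw [Real.rpow_def_of_pos hT0, hu_def]
      ring_nf
    have h4LL : Real.exp (4 * Real.log (Real.log T)) = (Real.log T) ^ (4:ℕ) := by
      rw [show (4:ℝ) * Real.log (Real.log T) = ((4:ℕ):ℝ) * Real.log (Real.log T) by norm_num,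
        Real.exp_nat_mul, Real.exp_log hL0]
    have h3LLL : Real.exp (3 * Real.log (Real.log (Real.log T)))
        = (Real.log (Real.log T)) ^ (3:ℕ) := by
      rw [show (3:ℝ) * Real.log (Real.log (Real.log T))
          = ((3:ℕ):ℝ) * Real.log (Real.log (Real.log T)) by norm_num,
        Real.exp_nat_mul, Real.exp_log hLL0]
    have hexpv : Real.exp (v T)
        = 3 * (Real.log T) ^ 4 / (256 * (Real.log (Real.log T)) ^ 3) := by
      simp only [hv_def]
      rw [Real.exp_sub, Real.exp_sub, h4LL, h3LLL, Real.exp_log (by norm_num : (0:ℝ) < 256/3)]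
      have hLLne : Real.log (Real.log T) ≠ 0 := ne_of_gt hLL0
      field_simp
    rw [Real.exp_sub, hexpu, hexpv]
end
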